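/- Let K be a field and q ∈ K with q nonzero and q^m ≠ 1 for all integers m ≥ 1. Then the following identity holds in the formal power series ring K⟦X⟧: ∑_{n=0}^{∞} X^{n+1} / ∏_{j=0}^{n} ((1 − X q^{j})(1 − X q^{−j})) = X · ∑_{(i₁,i₂,j₁,j₂,k₁,k₂) ∈ ℕ⁶} (−1)^{i₁+j₁+k₁} q^{ i₁(i₁+1)/2 + j₁(j₁+1)/2 + k₁(k₁+1)/2 + (i₁+i₂)(k₁−k₂) } X^{i₁+i₂+j₁+j₂+k₁+k₂} / ((q;q)_{i₁}(q;q)_{i₂}(q;q)_{j₁}(q;q)_{j₂}(q;q)_{k₁}(q;q)_{k₂}). (Both sides are formally summable in K⟦X⟧: the n-th term on the left has X-order n+1, since each factor 1 − Xq^{±j} is invertible in K⟦X⟧, and the term indexed by (i₁,…,k₂) on the right has X-order 1 + i₁+i₂+j₁+j₂+k₁+k₂.) -/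

import Mathlib

/-- The q-Pochhammer symbol `(q;q)_n = ∏_{k=1}^{n} (1 − qᵏ)`. -/
def pochQ {K : Type*} [Field K] (q : K) (n : ℕ) : K :=
  ∏ k ∈ Finset.range n, (1 - q ^ (k + 1))

open PowerSeries Finset

section Aux
variable {K : Type*} [Field K] {q : K}

lemma pochQ_zero : pochQ q 0 = 1 := by simp [pochQ]

lemma pochQ_succ (n : ℕ) : pochQ q (n + 1) = pochQ q n * (1 - q ^ (n + 1)) :=
  Finset.prod_range_succ _ _

lemma pochQ_ne_zero (hq : ∀ m : ℕ, 1 ≤ m → q ^ m ≠ 1) (n : ℕ) : pochQ q n ≠ 0 := by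
  refine Finset.prod_ne_zero_iff.2 fun k _ => ?_
  exact sub_ne_zero.2 (fun h => hq (k+1) (by omega) h.symm)

lemma tri_succ (n : ℕ) : (n + 1) * n / 2 = n * (n - 1) / 2 + n := by
  cases n with
  | zero => simp
  | succ m =>
    have h1 : (m + 1 + 1) * (m + 1) = (m + 1) * (m + 1 - 1) + 2 * (m + 1) := by
      simp only [Nat.add_sub_cancel]; ring
    have h2 : 2 ∣ (m + 1) * (m + 1 - 1) := by
      simp only [Nat.add_sub_cancel]; rw [mul_comm]
      exact (Nat.even_mul_succ_self m).two_dvd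
    omega

noncomputable def Phi (q c : K) : PowerSeries K :=
  PowerSeries.mk fun n => (-1 : K) ^ n * q ^ (n * (n - 1) / 2) * c ^ n / pochQ q n

noncomputable def Psi (q c : K) : PowerSeries K :=
  PowerSeries.mk fun n => c ^ n / pochQ q n

@[simp] lemma coeff_Phi (c : K) (n : ℕ) :
    (PowerSeries.coeff n) (Phi q c) = (-1 : K) ^ n * q ^ (n * (n - 1) / 2) * c ^ n / pochQ q n :=
  PowerSeries.coeff_mk _ _

@[simp] lemma coeff_Psi (c : K) (n : ℕ) :
    (PowerSeries.coeff n) (Psi q c) = c ^ n / pochQ q n :=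
  PowerSeries.coeff_mk _ _

lemma funEqPhi (hq : ∀ m : ℕ, 1 ≤ m → q ^ m ≠ 1) (c : K) :
    Phi q c = (1 - PowerSeries.C c * PowerSeries.X) * Phi q (c * q) := by
  ext n
  rw [sub_mul, one_mul, map_sub, mul_assoc, PowerSeries.coeff_C_mul]
  cases n with
  | zero => simp [pochQ]
  | succ m =>
    rw [PowerSeries.coeff_succ_X_mul, coeff_Phi, coeff_Phi, coeff_Phi, pochQ_succ]
    simp only [Nat.add_sub_cancel]
    rw [tri_succ]
    have hP := pochQ_ne_zero hq m
    have hP1 : (1 : K) - q ^ (m + 1) ≠ 0 :=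
      sub_ne_zero.2 (fun h => hq (m+1) (by omega) h.symm)
    field_simp
    ring

lemma funEqPsi (hq : ∀ m : ℕ, 1 ≤ m → q ^ m ≠ 1) (c : K) :
    (1 - PowerSeries.C c * PowerSeries.X) * Psi q c = Psi q (c * q) := by
  ext n
  rw [sub_mul, one_mul, map_sub, mul_assoc, PowerSeries.coeff_C_mul]
  cases n with
  | zero => simp [pochQ]
  | succ m =>
    rw [PowerSeries.coeff_succ_X_mul, coeff_Psi, coeff_Psi, coeff_Psi, pochQ_succ]
    have hP := pochQ_ne_zero hq m
    have hP1 : (1 : K) - q ^ (m + 1) ≠ 0 :=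
      sub_ne_zero.2 (fun h => hq (m+1) (by omega) h.symm)
    field_simp
    ring

lemma PhiPsi_coeff (c : K) (n : ℕ) :
    (PowerSeries.coeff n) (Phi q c * Psi q c)
      = c ^ n * (PowerSeries.coeff n) (Phi q 1 * Psi q 1) := by
  rw [PowerSeries.coeff_mul, PowerSeries.coeff_mul, Finset.mul_sum]
  refine Finset.sum_congr rfl fun p hp => ?_
  rw [Finset.HasAntidiagonal.mem_antidiagonal] at hp
  rw [coeff_Phi, coeff_Phi, coeff_Psi, coeff_Psi, ← hp, pow_add]
  ring

lemma PhiPsi_one (hq : ∀ m : ℕ, 1 ≤ m → q ^ m ≠ 1) : Phi q 1 * Psi q 1 = 1 := by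
  have key : Phi q 1 * Psi q 1 = Phi q q * Psi q q := by
    calc Phi q 1 * Psi q 1
        = Phi q (1 * q) * ((1 - PowerSeries.C 1 * PowerSeries.X) * Psi q 1) := by
          rw [funEqPhi hq 1]; ring
      _ = Phi q (1 * q) * Psi q (1 * q) := by rw [funEqPsi hq 1]
      _ = Phi q q * Psi q q := by rw [one_mul]
  ext n
  cases n with
  | zero =>
    rw [PowerSeries.coeff_zero_eq_constantCoeff, map_mul]
    simp [Phi, Psi, PowerSeries.constantCoeff_mk, pochQ]
  | succ m =>
    have h2 : (PowerSeries.coeff (m+1)) (Phi q 1 * Psi q 1)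
        = q ^ (m+1) * (PowerSeries.coeff (m+1)) (Phi q 1 * Psi q 1) := by
      conv_lhs => rw [key, PhiPsi_coeff]
    have h3 : (1 - q ^ (m+1)) * (PowerSeries.coeff (m+1)) (Phi q 1 * Psi q 1) = 0 := by
      linear_combination h2
    have hP1 : (1 : K) - q ^ (m + 1) ≠ 0 :=
      sub_ne_zero.2 (fun h => hq (m+1) (by omega) h.symm)
    have := (mul_eq_zero.1 h3).resolve_left hP1
    rw [this, PowerSeries.coeff_one, if_neg (Nat.succ_ne_zero m)]

lemma PhiPsi (hq : ∀ m : ℕ, 1 ≤ m → q ^ m ≠ 1) (c : K) : Phi q c * Psi q c = 1 := by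
  ext n
  rw [PhiPsi_coeff, PhiPsi_one hq]
  cases n with
  | zero => simp
  | succ m => simp

end Aux

section Aux2
variable {K : Type*} [Field K] {q : K}

lemma prod_psi (hq : ∀ m : ℕ, 1 ≤ m → q ^ m ≠ 1) (c : K) (L : ℕ) :
    (∏ t ∈ Finset.range L, (1 - PowerSeries.C (c * q ^ t) * PowerSeries.X)) * Psi q c
      = Psi q (c * q ^ L) := by
  induction L with
  | zero => simp
  | succ L ih =>
    calc (∏ t ∈ Finset.range (L + 1), (1 - PowerSeries.C (c * q ^ t) * PowerSeries.X)) * Psi q c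
        = (1 - PowerSeries.C (c * q ^ L) * PowerSeries.X) *
            ((∏ t ∈ Finset.range L, (1 - PowerSeries.C (c * q ^ t) * PowerSeries.X)) *
              Psi q c) := by
          rw [Finset.prod_range_succ]; ring
      _ = (1 - PowerSeries.C (c * q ^ L) * PowerSeries.X) * Psi q (c * q ^ L) := by rw [ih]
      _ = Psi q (c * q ^ L * q) := funEqPsi hq _
      _ = Psi q (c * q ^ (L + 1)) := by rw [pow_succ, ← mul_assoc]

lemma prod_eq (hq0 : q ≠ 0) (n : ℕ) :
    (∏ j ∈ Finset.range (n + 1),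
        ((1 - PowerSeries.C (q ^ j) * PowerSeries.X) *
          (1 - PowerSeries.C (q⁻¹ ^ j) * PowerSeries.X)))
      = (1 - PowerSeries.X) *
        ∏ t ∈ Finset.range (2 * n + 1), (1 - PowerSeries.C (q⁻¹ ^ n * q ^ t) * PowerSeries.X) := by
  induction n with
  | zero => simp
  | succ n ih =>
    have hshift : ∀ t : ℕ, q⁻¹ ^ (n + 1) * q ^ (t + 1) = q⁻¹ ^ n * q ^ t := by
      intro t
      rw [pow_succ, pow_succ, mul_assoc, ← mul_assoc q⁻¹ (q ^ t) q, mul_comm q⁻¹ (q ^ t),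
        mul_assoc, inv_mul_cancel₀ hq0, mul_one]
    have hmid : q⁻¹ ^ n * q ^ (2 * n + 1) = q ^ (n + 1) := by
      rw [inv_pow]
      have h : q ^ (2 * n + 1) = q ^ n * q ^ (n + 1) := by
        rw [← pow_add]; congr 1; ring
      rw [h, ← mul_assoc, inv_mul_cancel₀ (pow_ne_zero _ hq0), one_mul]
    have hexp : 2 * (n + 1) + 1 = 2 * n + 2 + 1 := by ring
    rw [Finset.prod_range_succ, ih]
    conv_rhs => rw [hexp, Finset.prod_range_succ', Finset.prod_range_succ]
    simp only [hshift, pow_zero, mul_one]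
    rw [hmid]
    ring

lemma GG_coeff (hq : ∀ m : ℕ, 1 ≤ m → q ^ m ≠ 1) (s : ℕ) :
    (PowerSeries.coeff s) (Phi q q * Psi q 1) = 1 := by
  have h1 : (1 - PowerSeries.X) * (Phi q q * Psi q 1) = 1 := by
    have := funEqPhi hq (1 : K)
    rw [map_one, one_mul, one_mul] at this
    rw [← mul_assoc, ← this, PhiPsi_one hq]
  induction s with
  | zero =>
    rw [PowerSeries.coeff_zero_eq_constantCoeff, map_mul]
    simp [Phi, Psi, pochQ]
  | succ m ih =>
    have h2 := congrArg (PowerSeries.coeff (m + 1)) h1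
    rw [sub_mul, one_mul, map_sub, PowerSeries.coeff_succ_X_mul, ih,
      PowerSeries.coeff_one, if_neg (Nat.succ_ne_zero m)] at h2
    exact sub_eq_zero.mp h2

lemma inv_eq (hq0 : q ≠ 0) (hq : ∀ m : ℕ, 1 ≤ m → q ^ m ≠ 1) (n : ℕ) :
    (∏ j ∈ Finset.range (n + 1),
        ((1 - PowerSeries.C (q ^ j) * PowerSeries.X) *
          (1 - PowerSeries.C (q⁻¹ ^ j) * PowerSeries.X)))⁻¹
      = (Phi q q * Psi q 1) * (Phi q (q ^ (n + 1)) * Psi q (q⁻¹ ^ n)) := by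
  have hc : (PowerSeries.constantCoeff)
      (∏ j ∈ Finset.range (n + 1),
        ((1 - PowerSeries.C (q ^ j) * PowerSeries.X) *
          (1 - PowerSeries.C (q⁻¹ ^ j) * PowerSeries.X))) ≠ 0 := by
    rw [map_prod]
    simp
  rw [PowerSeries.inv_eq_iff_mul_eq_one hc, prod_eq hq0]
  have hmid : q⁻¹ ^ n * q ^ (2 * n + 1) = q ^ (n + 1) := by
    rw [inv_pow]
    have : q ^ (2 * n + 1) = q ^ n * q ^ (n + 1) := by rw [← pow_add]; ring_nf
    rw [this, ← mul_assoc, inv_mul_cancel₀ (pow_ne_zero _ hq0), one_mul]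
  have h1 : (1 - PowerSeries.X) * (Phi q q * Psi q 1) = 1 := by
    have := funEqPhi hq (1 : K)
    rw [map_one, one_mul, one_mul] at this
    rw [← mul_assoc, ← this, PhiPsi_one hq]
  have h2 : (∏ t ∈ Finset.range (2 * n + 1),
        (1 - PowerSeries.C (q⁻¹ ^ n * q ^ t) * PowerSeries.X)) * Psi q (q⁻¹ ^ n)
      = Psi q (q ^ (n + 1)) := by
    rw [prod_psi hq, hmid]
  calc (Phi q q * Psi q 1) * (Phi q (q ^ (n + 1)) * Psi q (q⁻¹ ^ n)) *
        ((1 - PowerSeries.X) *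
          ∏ t ∈ Finset.range (2 * n + 1),
            (1 - PowerSeries.C (q⁻¹ ^ n * q ^ t) * PowerSeries.X))
      = ((1 - PowerSeries.X) * (Phi q q * Psi q 1)) *
        (Phi q (q ^ (n + 1)) *
          ((∏ t ∈ Finset.range (2 * n + 1),
            (1 - PowerSeries.C (q⁻¹ ^ n * q ^ t) * PowerSeries.X)) * Psi q (q⁻¹ ^ n))) := by
        ring
    _ = 1 := by rw [h1, h2, one_mul, PhiPsi hq]

end Aux2
section Aux3
variable {K : Type*} [Field K]

lemma sum_ite_pair {M R : ℕ} (hMR : M < R) (F : ℕ → ℕ → K) :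
    (∑ x ∈ Finset.range R, ∑ y ∈ Finset.range R, if x + y = M then F x y else 0)
      = ∑ t ∈ Finset.range (M + 1), F t (M - t) := by
  have step1 : ∀ x : ℕ,
      (∑ y ∈ Finset.range R, if x + y = M then F x y else 0)
        = if x ≤ M then F x (M - x) else 0 := by
    intro x
    by_cases hx : x ≤ M
    · rw [if_pos hx]
      have h1 : (∑ y ∈ Finset.range R, if x + y = M then F x y else 0)
          = ∑ y ∈ Finset.range R, if y = M - x then F x y else 0 :=
        Finset.sum_congr rfl (fun y _ => if_congr (by omega) rfl rfl)
      rw [h1, Finset.sum_ite_eq' (Finset.range R) (M - x) (fun y => F x y)]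
      rw [if_pos (Finset.mem_range.2 (by omega))]
    · rw [if_neg hx]
      exact Finset.sum_eq_zero fun y _ => if_neg (by omega)
  rw [Finset.sum_congr rfl fun x _ => step1 x]
  rw [← Finset.sum_subset (Finset.range_subset_range.2 (by omega : M + 1 ≤ R))
    (fun x _ hx => if_neg (by simp at hx ⊢; omega))]
  exact Finset.sum_congr rfl fun x hx => if_pos (by simp at hx; omega)

lemma sum_ite_pair_le {M R : ℕ} (hMR : M < R) (F : ℕ → ℕ → K) :
    (∑ x ∈ Finset.range R, ∑ y ∈ Finset.range R, if x + y ≤ M then F x y else 0)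
      = ∑ t ∈ Finset.range (M + 1), ∑ r ∈ Finset.range (t + 1), F r (t - r) := by
  have step1 : ∀ x y : ℕ, (if x + y ≤ M then F x y else 0)
      = ∑ t ∈ Finset.range (M + 1), if x + y = t then F x y else 0 := by
    intro x y
    rw [Finset.sum_ite_eq (Finset.range (M + 1)) (x + y) (fun _ => F x y)]
    simp [Nat.lt_succ_iff]
  calc (∑ x ∈ Finset.range R, ∑ y ∈ Finset.range R, if x + y ≤ M then F x y else 0)
      = ∑ x ∈ Finset.range R, ∑ y ∈ Finset.range R, ∑ t ∈ Finset.range (M + 1),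
          if x + y = t then F x y else 0 :=
        Finset.sum_congr rfl fun x _ => Finset.sum_congr rfl fun y _ => step1 x y
    _ = ∑ x ∈ Finset.range R, ∑ t ∈ Finset.range (M + 1), ∑ y ∈ Finset.range R,
          if x + y = t then F x y else 0 :=
        Finset.sum_congr rfl fun x _ => Finset.sum_comm
    _ = ∑ t ∈ Finset.range (M + 1), ∑ x ∈ Finset.range R, ∑ y ∈ Finset.range R,
          if x + y = t then F x y else 0 := Finset.sum_comm
    _ = ∑ t ∈ Finset.range (M + 1), ∑ r ∈ Finset.range (t + 1), F r (t - r) := by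
        refine Finset.sum_congr rfl fun t ht => ?_
        rw [Finset.mem_range] at ht
        exact sum_ite_pair (by omega) F

lemma coeff_mul_range (M : ℕ) (A B : PowerSeries K) :
    (PowerSeries.coeff M) (A * B)
      = ∑ t ∈ Finset.range (M + 1),
          (PowerSeries.coeff t) A * (PowerSeries.coeff (M - t)) B := by
  rw [PowerSeries.coeff_mul]
  exact Finset.Nat.sum_antidiagonal_eq_sum_range_succ
    (fun i j => (PowerSeries.coeff i) A * (PowerSeries.coeff j) B) M

lemma quad {R M : ℕ} (hMR : M < R) (c : K) (A B C D : PowerSeries K) :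
    (∑ j1 ∈ Finset.range R, ∑ j2 ∈ Finset.range R, ∑ k1 ∈ Finset.range R, ∑ k2 ∈ Finset.range R,
      if j1 + j2 + k1 + k2 = M then
        c * ((PowerSeries.coeff j1) A * (PowerSeries.coeff j2) B *
          ((PowerSeries.coeff k1) C * (PowerSeries.coeff k2) D)) else 0)
      = c * (PowerSeries.coeff M) ((A * B) * (C * D)) := by
  have inner : ∀ j1 j2 : ℕ,
      (∑ k1 ∈ Finset.range R, ∑ k2 ∈ Finset.range R,
        if j1 + j2 + k1 + k2 = M then
          c * ((PowerSeries.coeff j1) A * (PowerSeries.coeff j2) B *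
            ((PowerSeries.coeff k1) C * (PowerSeries.coeff k2) D)) else 0)
      = if j1 + j2 ≤ M then
          c * ((PowerSeries.coeff j1) A * (PowerSeries.coeff j2) B *
            (PowerSeries.coeff (M - (j1 + j2))) (C * D)) else 0 := by
    intro j1 j2
    by_cases hj : j1 + j2 ≤ M
    · rw [if_pos hj]
      have h1 : (∑ k1 ∈ Finset.range R, ∑ k2 ∈ Finset.range R,
          if j1 + j2 + k1 + k2 = M then
            c * ((PowerSeries.coeff j1) A * (PowerSeries.coeff j2) B *
              ((PowerSeries.coeff k1) C * (PowerSeries.coeff k2) D)) else 0)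
          = ∑ k1 ∈ Finset.range R, ∑ k2 ∈ Finset.range R,
          if k1 + k2 = M - (j1 + j2) then
            c * ((PowerSeries.coeff j1) A * (PowerSeries.coeff j2) B *
              ((PowerSeries.coeff k1) C * (PowerSeries.coeff k2) D)) else 0 :=
        Finset.sum_congr rfl fun k1 _ => Finset.sum_congr rfl fun k2 _ =>
          if_congr (by omega) rfl rfl
      rw [h1, sum_ite_pair (M := M - (j1 + j2)) (R := R) (by omega) (fun k1 k2 =>
        c * ((PowerSeries.coeff j1) A * (PowerSeries.coeff j2) B *
          ((PowerSeries.coeff k1) C * (PowerSeries.coeff k2) D)))]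
      conv_rhs => rw [coeff_mul_range (M - (j1 + j2)) C D, Finset.mul_sum, Finset.mul_sum]
    · rw [if_neg hj]
      exact Finset.sum_eq_zero fun k1 _ =>
        Finset.sum_eq_zero fun k2 _ => if_neg (by omega)
  rw [Finset.sum_congr rfl fun j1 _ => Finset.sum_congr rfl fun j2 _ => inner j1 j2]
  rw [sum_ite_pair_le hMR (fun j1 j2 =>
    c * ((PowerSeries.coeff j1) A * (PowerSeries.coeff j2) B *
      (PowerSeries.coeff (M - (j1 + j2))) (C * D)))]
  conv_rhs => rw [coeff_mul_range M (A * B) (C * D), Finset.mul_sum]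
  refine Finset.sum_congr rfl fun t ht => ?_
  rw [Finset.mem_range] at ht
  conv_rhs => rw [coeff_mul_range t A B, Finset.sum_mul, Finset.mul_sum]
  refine Finset.sum_congr rfl fun r hr => ?_
  rw [Finset.mem_range] at hr
  rw [show r + (t - r) = t from by omega]

lemma six_fold {R M : ℕ} (hMR : M < R) (A B : PowerSeries K) (Cf Df : ℕ → PowerSeries K)
    (hAB : ∀ t, (PowerSeries.coeff t) (A * B) = 1) :
    (∑ i1 ∈ Finset.range R, ∑ i2 ∈ Finset.range R, ∑ j1 ∈ Finset.range R,
      ∑ j2 ∈ Finset.range R, ∑ k1 ∈ Finset.range R, ∑ k2 ∈ Finset.range R,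
      if i1 + i2 + j1 + j2 + k1 + k2 = M then
        (PowerSeries.coeff i1) A * (PowerSeries.coeff i2) B *
          ((PowerSeries.coeff j1) A * (PowerSeries.coeff j2) B *
            ((PowerSeries.coeff k1) (Cf (i1 + i2)) * (PowerSeries.coeff k2) (Df (i1 + i2))))
      else 0)
      = ∑ t ∈ Finset.range (M + 1),
          (PowerSeries.coeff (M - t)) ((A * B) * (Cf t * Df t)) := by
  have inner : ∀ i1 i2 : ℕ,
      (∑ j1 ∈ Finset.range R, ∑ j2 ∈ Finset.range R, ∑ k1 ∈ Finset.range R,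
        ∑ k2 ∈ Finset.range R,
        if i1 + i2 + j1 + j2 + k1 + k2 = M then
          (PowerSeries.coeff i1) A * (PowerSeries.coeff i2) B *
            ((PowerSeries.coeff j1) A * (PowerSeries.coeff j2) B *
              ((PowerSeries.coeff k1) (Cf (i1 + i2)) * (PowerSeries.coeff k2) (Df (i1 + i2))))
        else 0)
      = if i1 + i2 ≤ M then
          (PowerSeries.coeff i1) A * (PowerSeries.coeff i2) B *
            (PowerSeries.coeff (M - (i1 + i2))) ((A * B) * (Cf (i1 + i2) * Df (i1 + i2)))
        else 0 := by
    intro i1 i2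
    by_cases hi : i1 + i2 ≤ M
    · rw [if_pos hi]
      have h1 : (∑ j1 ∈ Finset.range R, ∑ j2 ∈ Finset.range R, ∑ k1 ∈ Finset.range R,
          ∑ k2 ∈ Finset.range R,
          if i1 + i2 + j1 + j2 + k1 + k2 = M then
            (PowerSeries.coeff i1) A * (PowerSeries.coeff i2) B *
              ((PowerSeries.coeff j1) A * (PowerSeries.coeff j2) B *
                ((PowerSeries.coeff k1) (Cf (i1 + i2)) *
                  (PowerSeries.coeff k2) (Df (i1 + i2)))) else 0)
          = ∑ j1 ∈ Finset.range R, ∑ j2 ∈ Finset.range R, ∑ k1 ∈ Finset.range R,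
          ∑ k2 ∈ Finset.range R,
          if j1 + j2 + k1 + k2 = M - (i1 + i2) then
            (PowerSeries.coeff i1) A * (PowerSeries.coeff i2) B *
              ((PowerSeries.coeff j1) A * (PowerSeries.coeff j2) B *
                ((PowerSeries.coeff k1) (Cf (i1 + i2)) *
                  (PowerSeries.coeff k2) (Df (i1 + i2)))) else 0 :=
        Finset.sum_congr rfl fun j1 _ => Finset.sum_congr rfl fun j2 _ =>
          Finset.sum_congr rfl fun k1 _ => Finset.sum_congr rfl fun k2 _ =>
            if_congr (by omega) rfl rfl
      rw [h1, quad (M := M - (i1 + i2)) (by omega)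
        ((PowerSeries.coeff i1) A * (PowerSeries.coeff i2) B)
        A B (Cf (i1 + i2)) (Df (i1 + i2))]
    · rw [if_neg hi]
      refine Finset.sum_eq_zero fun j1 _ => Finset.sum_eq_zero fun j2 _ =>
        Finset.sum_eq_zero fun k1 _ => Finset.sum_eq_zero fun k2 _ => if_neg (by omega)
  rw [Finset.sum_congr rfl fun i1 _ => Finset.sum_congr rfl fun i2 _ => inner i1 i2]
  rw [sum_ite_pair_le hMR (fun i1 i2 =>
    (PowerSeries.coeff i1) A * (PowerSeries.coeff i2) B *
      (PowerSeries.coeff (M - (i1 + i2))) ((A * B) * (Cf (i1 + i2) * Df (i1 + i2))))]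
  refine Finset.sum_congr rfl fun t ht => ?_
  rw [Finset.mem_range] at ht
  have h2 : ∀ r ∈ Finset.range (t + 1),
      (PowerSeries.coeff r) A * (PowerSeries.coeff (t - r)) B *
        (PowerSeries.coeff (M - (r + (t - r)))) ((A * B) * (Cf (r + (t - r)) * Df (r + (t - r))))
      = (PowerSeries.coeff r) A * (PowerSeries.coeff (t - r)) B *
        (PowerSeries.coeff (M - t)) ((A * B) * (Cf t * Df t)) := by
    intro r hr
    rw [Finset.mem_range] at hr
    rw [show r + (t - r) = t from by omega]
  rw [Finset.sum_congr rfl h2, ← Finset.sum_mul, ← coeff_mul_range, hAB, one_mul]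

end Aux3
section Main
variable {K : Type*} [Field K] {q : K}

lemma key_summand (hq0 : q ≠ 0) (hq : ∀ m : ℕ, 1 ≤ m → q ^ m ≠ 1)
    (i1 i2 j1 j2 k1 k2 : ℕ) :
    (-1 : K) ^ (i1 + j1 + k1) *
        q ^ (((i1 * (i1 + 1) / 2 + j1 * (j1 + 1) / 2 + k1 * (k1 + 1) / 2 : ℕ) : ℤ)
            + ((i1 : ℤ) + (i2 : ℤ)) * ((k1 : ℤ) - (k2 : ℤ))) /
        (pochQ q i1 * pochQ q i2 * pochQ q j1 * pochQ q j2 * pochQ q k1 * pochQ q k2)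
      = (PowerSeries.coeff i1) (Phi q q) * (PowerSeries.coeff i2) (Psi q 1) *
          ((PowerSeries.coeff j1) (Phi q q) * (PowerSeries.coeff j2) (Psi q 1) *
            ((PowerSeries.coeff k1) (Phi q (q ^ (i1 + i2 + 1))) *
              (PowerSeries.coeff k2) (Psi q (q⁻¹ ^ (i1 + i2))))) := by
  have hz : q ^ (((i1 * (i1 + 1) / 2 + j1 * (j1 + 1) / 2 + k1 * (k1 + 1) / 2 : ℕ) : ℤ)
        + ((i1 : ℤ) + (i2 : ℤ)) * ((k1 : ℤ) - (k2 : ℤ)))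
      = q ^ (i1 * (i1 + 1) / 2) * q ^ (j1 * (j1 + 1) / 2) * q ^ (k1 * (k1 + 1) / 2)
        * q ^ ((i1 + i2) * k1) * (q ^ ((i1 + i2) * k2))⁻¹ := by
    have h1 : (((i1 * (i1 + 1) / 2 + j1 * (j1 + 1) / 2 + k1 * (k1 + 1) / 2 : ℕ)) : ℤ)
        + ((i1 : ℤ) + (i2 : ℤ)) * ((k1 : ℤ) - (k2 : ℤ))
        = ((i1 * (i1 + 1) / 2 : ℕ) : ℤ) + ((j1 * (j1 + 1) / 2 : ℕ) : ℤ)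
          + ((k1 * (k1 + 1) / 2 : ℕ) : ℤ)
          + (((i1 + i2) * k1 : ℕ) : ℤ) - (((i1 + i2) * k2 : ℕ) : ℤ) := by push_cast; ring
    rw [h1, zpow_sub₀ hq0, zpow_add₀ hq0, zpow_add₀ hq0, zpow_add₀ hq0,
      zpow_natCast, zpow_natCast, zpow_natCast, zpow_natCast, zpow_natCast, div_eq_mul_inv]
  have t1 : ∀ a : ℕ, q ^ (a * (a + 1) / 2) = q ^ (a * (a - 1) / 2) * q ^ a := by
    intro a
    rw [← pow_add, mul_comm a (a + 1), tri_succ]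
  have e1 : (q ^ (i1 + i2 + 1)) ^ k1 = q ^ ((i1 + i2) * k1) * q ^ k1 := by
    rw [← pow_mul, ← pow_add]; congr 1; ring
  have e2 : (q⁻¹ ^ (i1 + i2)) ^ k2 = (q ^ ((i1 + i2) * k2))⁻¹ := by
    rw [← pow_mul, inv_pow]
  simp only [coeff_Phi, coeff_Psi, one_pow]
  rw [hz, t1 i1, t1 j1, t1 k1, e1, e2]
  have hP1 := pochQ_ne_zero hq i1
  have hP2 := pochQ_ne_zero hq i2
  have hP3 := pochQ_ne_zero hq j1
  have hP4 := pochQ_ne_zero hq j2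
  have hP5 := pochQ_ne_zero hq k1
  have hP6 := pochQ_ne_zero hq k2
  have hpow : q ^ ((i1 + i2) * k2) ≠ 0 := pow_ne_zero _ hq0
  field_simp
  ring

end Main

/-- Quiver form of the `F_K` invariant of the figure-eight knot from the inverted Habiro
series, stated coefficientwise in `K⟦X⟧`.  The left-hand side is
`∑_{n≥0} X^{n+1} / ∏_{j=0}^{n} ((1 − Xqʲ)(1 − Xq^{−j}))` (whose `n`-th term has `X`-order
`n+1`, so only `n ≤ N−1` contribute to the coefficient of `X^N`), and the right-hand side
is `X · ∑ (−1)^{i₁+j₁+k₁}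
q^{i₁(i₁+1)/2 + j₁(j₁+1)/2 + k₁(k₁+1)/2 + (i₁+i₂)(k₁−k₂)} X^{i₁+i₂+j₁+j₂+k₁+k₂}/∏(q;q)`. -/
theorem figure_eight_inverted_habiro_quiver {K : Type*} [Field K] (q : K) (hq0 : q ≠ 0)
    (hq : ∀ m : ℕ, 1 ≤ m → q ^ m ≠ 1) (N : ℕ) :
    (PowerSeries.coeff N)
        (∑ n ∈ Finset.range N,
          PowerSeries.X ^ (n + 1) *
            (∏ j ∈ Finset.range (n + 1),
              ((1 - PowerSeries.C (q ^ j) * PowerSeries.X) *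
                (1 - PowerSeries.C (q⁻¹ ^ j) * PowerSeries.X)))⁻¹) =
      ∑ i1 ∈ Finset.range (N + 1), ∑ i2 ∈ Finset.range (N + 1),
        ∑ j1 ∈ Finset.range (N + 1), ∑ j2 ∈ Finset.range (N + 1),
          ∑ k1 ∈ Finset.range (N + 1), ∑ k2 ∈ Finset.range (N + 1),
            if i1 + i2 + j1 + j2 + k1 + k2 + 1 = N then
              (-1 : K) ^ (i1 + j1 + k1) *
                q ^ (((i1 * (i1 + 1) / 2 + j1 * (j1 + 1) / 2 + k1 * (k1 + 1) / 2 : ℕ) : ℤ)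
                    + ((i1 : ℤ) + (i2 : ℤ)) * ((k1 : ℤ) - (k2 : ℤ))) /
                (pochQ q i1 * pochQ q i2 * pochQ q j1 * pochQ q j2 *
                  pochQ q k1 * pochQ q k2)
            else 0 := by
  rcases Nat.eq_zero_or_pos N with hN | hN
  · subst hN
    simp
  obtain ⟨M, rfl⟩ : ∃ M, N = M + 1 := ⟨N - 1, by omega⟩
  rw [map_sum]
  have hL : ∀ n ∈ Finset.range (M + 1),
      (PowerSeries.coeff (M + 1))
        (PowerSeries.X ^ (n + 1) *
          (∏ j ∈ Finset.range (n + 1),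
            ((1 - PowerSeries.C (q ^ j) * PowerSeries.X) *
              (1 - PowerSeries.C (q⁻¹ ^ j) * PowerSeries.X)))⁻¹)
      = (PowerSeries.coeff (M - n))
          ((Phi q q * Psi q 1) * (Phi q (q ^ (n + 1)) * Psi q (q⁻¹ ^ n))) := by
    intro n hn
    rw [Finset.mem_range] at hn
    rw [inv_eq hq0 hq n, PowerSeries.coeff_X_pow_mul', if_pos (by omega)]
    simp only [Nat.succ_sub_succ]
  rw [Finset.sum_congr rfl hL]
  simp only [key_summand hq0 hq, add_left_inj]
  exact (six_fold (by omega : M < M + 1 + 1) (Phi q q) (Psi q 1)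
    (fun s => Phi q (q ^ (s + 1))) (fun s => Psi q (q⁻¹ ^ s)) (GG_coeff hq)).symm
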